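/- Let m > 1, 1 < p < m, let σ be a real number with σ(m−1) + 2(p−1) > 0 and let N ≥ 1 be an integer; set α = (σ+2)/(σ(m−1)+2(p−1)) and β = (m−p)/(σ(m−1)+2(p−1)). Then there is no R > 0 and no twice continuously differentiable positive function f : (R,∞) → (0,∞) solving (f^m)''(ξ) + ((N−1)/ξ)(f^m)'(ξ) − α f(ξ) + β ξ f'(ξ) + ξ^σ f(ξ)^p = 0 on (R,∞) such that, as ξ → ∞, simultaneously ξ^σ f(ξ)^{p−1} → +∞, ξ^{−(σ+2)} f(ξ)^{m−p} → 0, and ξ^{−(σ+1)} f(ξ)^{m−p−1} f'(ξ) → 0. -/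

import Mathlib

open Set Filter

/-- Algebraic identity used to compute the derivative of the auxiliary function `H`. -/
private lemma alg1 {x F D G2v : ℝ} {σ α β m p : ℝ} {N : ℕ}
    (hx : 0 < x) (hF : 0 < F)
    (hODE : G2v + ((N : ℝ) - 1) / x * (m * F ^ (m - 1) * D) - α * F + β * x * D
      + x ^ σ * F ^ p = 0) :
    ((N : ℝ) - 1) * x ^ (((N : ℝ) - 1) - 1) * (m * F ^ (m - 1) * D)
      + x ^ ((N : ℝ) - 1) * G2v
      + β * ((N : ℝ) * x ^ (((N : ℝ)) - 1) * F + x ^ ((N : ℝ)) * D)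
    = x ^ ((N : ℝ) - 1) * (F * ((α + β * (N : ℝ)) - x ^ σ * F ^ (p - 1))) := by
  have e1 : x ^ (((N : ℝ) - 1) - 1) = x ^ ((N : ℝ) - 1) / x := by
    rw [Real.rpow_sub hx, Real.rpow_one]
  have e3 : x ^ ((N : ℝ) - 1) * x = x ^ ((N : ℝ)) := by
    rw [← Real.rpow_add_one hx.ne']; congr 1; ring
  have e4 : F ^ (p - 1) * F = F ^ p := by
    rw [← Real.rpow_add_one hF.ne']; congr 1; ring
  have hG2 : G2v = α * F - β * x * D - x ^ σ * F ^ p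
      - ((N : ℝ) - 1) / x * (m * F ^ (m - 1) * D) := by linarith
  rw [hG2, e1, ← e3, ← e4]
  field_simp
  ring

/-- The final iteration: a sequence tending to `∞` cannot satisfy `u (k+1) ≤ u k / p + C`
with `p > 1`. -/
private lemma iter_contradiction {p C : ℝ} (hp : 1 < p) {u : ℕ → ℝ}
    (hrec : ∀ k, u (k + 1) ≤ u k / p + C) (hu : Tendsto u atTop atTop) : False := by
  have hp0 : (0 : ℝ) < p := by linarith
  obtain ⟨k₀, hk₀⟩ := eventually_atTop.mp (hu.eventually_gt_atTop (p * C / (p - 1)))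
  have hdec : ∀ k, k₀ ≤ k → u (k + 1) < u k := by
    intro k hk
    have h1 : p * C < u k * (p - 1) := (div_lt_iff₀ (by linarith)).mp (hk₀ k hk)
    have h3 := mul_le_mul_of_nonneg_left (hrec k) hp0.le
    have h4 : p * (u k / p + C) = u k + p * C := by field_simp
    have h5 : p * u (k + 1) < p * u k := by nlinarith
    exact lt_of_mul_lt_mul_left h5 hp0.le
  have hmono : ∀ k, k₀ ≤ k → u k ≤ u k₀ := by
    intro k hk
    induction k, hk using Nat.le_induction with
    | base => exact le_rfl
    | succ n hn ih => exact le_trans (hdec n hn).le ih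
  obtain ⟨k, hk1, hk2⟩ := ((eventually_ge_atTop k₀).and (hu.eventually_gt_atTop (u k₀))).exists
  exact absurd (hmono k hk1) (not_le.mpr hk2)

/-- Taking logarithms in the key inequality `f(2ξ)^p ≤ K ξ^{-σ} f(ξ)`. -/
private lemma log_rec {K ξ fξ f2ξ p σ : ℝ} (hK : 0 < K) (hξ : 0 < ξ) (hf1 : 0 < fξ)
    (hf2 : 0 < f2ξ) (hp : 1 < p) (hkey : f2ξ ^ p ≤ K * ξ ^ (-σ) * fξ) :
    σ * Real.log (2 * ξ) + (p - 1) * Real.log f2ξ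
      ≤ (σ * Real.log ξ + (p - 1) * Real.log fξ) / p
        + (σ * Real.log 2 + (p - 1) / p * Real.log K) := by
  have hp0 : (0 : ℝ) < p := by linarith
  have hrp : (0 : ℝ) < ξ ^ (-σ) := Real.rpow_pos_of_pos hξ _
  have h1 : p * Real.log f2ξ ≤ Real.log K + (-σ) * Real.log ξ + Real.log fξ := by
    have h := Real.log_le_log (Real.rpow_pos_of_pos hf2 p) hkey
    rwa [Real.log_rpow hf2, Real.log_mul (by positivity) hf1.ne',
      Real.log_mul hK.ne' hrp.ne', Real.log_rpow hξ] at h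
  have hlog2 : Real.log (2 * ξ) = Real.log 2 + Real.log ξ := Real.log_mul two_ne_zero hξ.ne'
  have h2 : (p - 1) * (p * Real.log f2ξ)
      ≤ (p - 1) * (Real.log K + (-σ) * Real.log ξ + Real.log fξ) :=
    mul_le_mul_of_nonneg_left h1 (by linarith)
  have h3 : (σ * Real.log ξ + (p - 1) * Real.log fξ) / p
        + (σ * Real.log 2 + (p - 1) / p * Real.log K)
      = (σ * Real.log ξ + (p - 1) * Real.log fξ + p * σ * Real.log 2
        + (p - 1) * Real.log K) / p := by
    field_simp; ring
  rw [hlog2, h3, le_div_iff₀ hp0]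
  nlinarith [h2]

set_option maxHeartbeats 2000000 in
/-- Lemma 3.6, Case 3: no positive C² solution of the self-similar profile ODE on
(R,∞) can satisfy simultaneously ξ^σ f^(p-1) → +∞, ξ^(-(σ+2)) f^(m-p) → 0 and
ξ^(-(σ+1)) f^(m-p-1) f' → 0 as ξ → ∞. -/
theorem no_connection_to_Q4_at_infinity (m p σ : ℝ) (N : ℕ)
    (hm : 1 < m) (hp1 : 1 < p) (hpm : p < m)
    (hL : 0 < σ * (m - 1) + 2 * (p - 1)) (hN : 1 ≤ N)
    (α β : ℝ)
    (hα : α = (σ + 2) / (σ * (m - 1) + 2 * (p - 1)))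
    (hβ : β = (m - p) / (σ * (m - 1) + 2 * (p - 1))) :
    ¬ ∃ R > (0 : ℝ), ∃ f : ℝ → ℝ,
      (∀ ξ ∈ Set.Ioi R, 0 < f ξ ∧ DifferentiableAt ℝ f ξ ∧
        DifferentiableAt ℝ (deriv f) ξ) ∧
      ContinuousOn (deriv (deriv f)) (Set.Ioi R) ∧
      (∀ ξ ∈ Set.Ioi R,
        deriv (deriv fun x => f x ^ m) ξ
          + ((N : ℝ) - 1) / ξ * deriv (fun x => f x ^ m) ξ
          - α * f ξ + β * ξ * deriv f ξ + ξ ^ σ * f ξ ^ p = 0) ∧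
      Filter.Tendsto (fun ξ : ℝ => ξ ^ σ * f ξ ^ (p - 1)) Filter.atTop Filter.atTop ∧
      Filter.Tendsto (fun ξ : ℝ => ξ ^ (-(σ + 2)) * f ξ ^ (m - p))
        Filter.atTop (nhds 0) ∧
      Filter.Tendsto (fun ξ : ℝ => ξ ^ (-(σ + 1)) * f ξ ^ (m - p - 1) * deriv f ξ)
        Filter.atTop (nhds 0) := by
  rintro ⟨R, hR, f, hreg, hC2, hODE, hZtop, hB0, hpsi0⟩
  -- Basic positivity facts
  have hm0 : (0 : ℝ) < m := by linarith
  have hp0 : (0 : ℝ) < p := by linarith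
  have hσ2 : (0 : ℝ) < σ + 2 := by nlinarith
  have hα0 : 0 < α := by rw [hα]; exact div_pos hσ2 hL
  have hβ0 : 0 < β := by rw [hβ]; exact div_pos (by linarith) hL
  have hN1 : (1 : ℝ) ≤ (N : ℝ) := by exact_mod_cast hN
  have hf0 : ∀ x ∈ Ioi R, 0 < f x := fun x hx => (hreg x hx).1
  have hdf : ∀ x ∈ Ioi R, DifferentiableAt ℝ f x := fun x hx => (hreg x hx).2.1
  have hddf : ∀ x ∈ Ioi R, DifferentiableAt ℝ (deriv f) x := fun x hx => (hreg x hx).2.2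
  -- First derivative of f^m
  have hgd : ∀ x ∈ Ioi R,
      HasDerivAt (fun y => f y ^ m) (m * f x ^ (m - 1) * deriv f x) x := by
    intro x hx
    have h := (hdf x hx).hasDerivAt.rpow_const (p := m) (Or.inl (hf0 x hx).ne')
    convert h using 1; ring
  have hgd' : ∀ x ∈ Ioi R, deriv (fun y => f y ^ m) x = m * f x ^ (m - 1) * deriv f x :=
    fun x hx => (hgd x hx).deriv
  -- Derivative of g1 = (f^m)'
  have hG1d : ∀ x ∈ Ioi R,
      HasDerivAt (fun y => m * f y ^ (m - 1) * deriv f y)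
        (m * (m - 1) * f x ^ (m - 2) * (deriv f x) ^ 2
          + m * f x ^ (m - 1) * deriv (deriv f) x) x := by
    intro x hx
    have hpow : HasDerivAt (fun t => f t ^ (m - 1))
        (deriv f x * (m - 1) * f x ^ (m - 1 - 1)) x :=
      (hdf x hx).hasDerivAt.rpow_const (Or.inl (hf0 x hx).ne')
    have h := (hpow.const_mul m).mul (hddf x hx).hasDerivAt
    refine h.congr_deriv ?_
    rw [show m - 2 = m - 1 - 1 by ring]
    ring
  -- Second derivative of f^m
  have hdd : ∀ x ∈ Ioi R,
      deriv (deriv fun y => f y ^ m) x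
        = m * (m - 1) * f x ^ (m - 2) * (deriv f x) ^ 2
          + m * f x ^ (m - 1) * deriv (deriv f) x := by
    intro x hx
    have hev : (deriv fun y => f y ^ m) =ᶠ[nhds x] (fun y => m * f y ^ (m - 1) * deriv f y) := by
      filter_upwards [isOpen_Ioi.mem_nhds hx] with t ht using hgd' t ht
    rw [hev.deriv_eq]
    exact (hG1d x hx).deriv
  -- The ODE in terms of f, f', f''
  have hODE2 : ∀ x ∈ Ioi R,
      (m * (m - 1) * f x ^ (m - 2) * (deriv f x) ^ 2
          + m * f x ^ (m - 1) * deriv (deriv f) x)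
        + ((N : ℝ) - 1) / x * (m * f x ^ (m - 1) * deriv f x)
        - α * f x + β * x * deriv f x + x ^ σ * f x ^ p = 0 := by
    intro x hx
    have h0 := hODE x hx
    rw [hdd x hx, hgd' x hx] at h0
    linarith
  -- The auxiliary function H and its derivative
  set Haux : ℝ → ℝ :=
    fun x => x ^ ((N : ℝ) - 1) * (m * f x ^ (m - 1) * deriv f x)
      + β * (x ^ ((N : ℝ)) * f x) with hHdef
  have hH : ∀ x ∈ Ioi R, HasDerivAt Haux
      (x ^ ((N : ℝ) - 1) * (f x * ((α + β * (N : ℝ)) - x ^ σ * f x ^ (p - 1)))) x := by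
    intro x hx
    have hx0 : (0 : ℝ) < x := lt_trans hR hx
    have h1 : HasDerivAt (fun t : ℝ => t ^ ((N : ℝ) - 1))
        (((N : ℝ) - 1) * x ^ (((N : ℝ) - 1) - 1)) x :=
      Real.hasDerivAt_rpow_const (Or.inl hx0.ne')
    have h4 : HasDerivAt (fun t : ℝ => t ^ ((N : ℝ)))
        ((N : ℝ) * x ^ (((N : ℝ)) - 1)) x :=
      Real.hasDerivAt_rpow_const (Or.inl hx0.ne')
    have hsum := (h1.mul (hG1d x hx)).add (((h4.mul (hdf x hx).hasDerivAt)).const_mul β)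
    have heq := alg1 (D := deriv f x)
      (G2v := m * (m - 1) * f x ^ (m - 2) * (deriv f x) ^ 2
        + m * f x ^ (m - 1) * deriv (deriv f) x)
      (σ := σ) (α := α) (β := β) (m := m) (p := p) (N := N)
      hx0 (hf0 x hx) (hODE2 x hx)
    refine hsum.congr_deriv ?_
    rw [← heq]
  -- Threshold ξ₁ where Z = x^σ f^{p-1} is large
  set M₀ : ℝ := 2 * (α + β * (N : ℝ)) + α + 1 with hM₀def
  obtain ⟨ξ₁', hξ₁'⟩ := eventually_atTop.mp (hZtop.eventually_ge_atTop M₀)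
  set ξ₁ : ℝ := max ξ₁' (R + 1) with hξ₁def
  have hξ₁R : R < ξ₁ := lt_of_lt_of_le (by linarith) (le_max_right _ _)
  have hξ₁Z : ∀ x, ξ₁ ≤ x → M₀ ≤ x ^ σ * f x ^ (p - 1) :=
    fun x hx => hξ₁' x (le_trans (le_max_left _ _) hx)
  have hmemξ₁ : ∀ x, ξ₁ ≤ x → x ∈ Ioi R := fun x hx => lt_of_lt_of_le hξ₁R hx
  -- At any zero of f' beyond ξ₁, f'' < 0
  have LM : ∀ x, ξ₁ ≤ x → deriv f x = 0 → deriv (deriv f) x < 0 := by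
    intro x hx hD0
    have hxR := hmemξ₁ x hx
    have hx0 : (0 : ℝ) < x := lt_trans hR hxR
    have hfx := hf0 x hxR
    have h0 := hODE2 x hxR
    rw [hD0] at h0
    have e4 : f x ^ (p - 1) * f x = f x ^ p := by
      rw [← Real.rpow_add_one hfx.ne']; congr 1; ring
    have hZx := hξ₁Z x hx
    have hq : (0 : ℝ) < m * f x ^ (m - 1) := by positivity
    have hyp : x ^ σ * f x ^ p = (x ^ σ * f x ^ (p - 1)) * f x := by rw [mul_assoc, e4]
    have h1 : m * f x ^ (m - 1) * deriv (deriv f) x = α * f x - x ^ σ * f x ^ p := by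
      ring_nf at h0 ⊢; linarith
    have h2 : x ^ σ * f x ^ p ≥ M₀ * f x := by
      rw [hyp]; exact mul_le_mul_of_nonneg_right hZx hfx.le
    have hM₀α : α < M₀ := by
      simp only [hM₀def]
      linarith [hα0, mul_pos hβ0 (lt_of_lt_of_le one_pos hN1)]
    have h4 : 0 < (M₀ - α) * f x := mul_pos (by linarith) hfx
    have h3 : m * f x ^ (m - 1) * deriv (deriv f) x < 0 := by nlinarith [h1, h2, h4]
    by_contra hcon
    push_neg at hcon
    exact absurd h3 (not_lt.mpr (mul_nonneg hq.le hcon))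
  -- f' continuous on (R, ∞)
  have hcontF' : ∀ x ∈ Ioi R, ContinuousAt (deriv f) x :=
    fun x hx => (hddf x hx).continuousAt
  -- Once f' < 0 beyond ξ₁, it stays negative
  have NEG : ∀ x, ξ₁ ≤ x → deriv f x < 0 → ∀ y, x < y → deriv f y < 0 := by
    intro x hx hfx y hxy
    by_contra hy
    push_neg at hy
    set S : Set ℝ := {t | t ∈ Icc x y ∧ 0 ≤ deriv f t} with hSdef
    have hIccR : Icc x y ⊆ Ioi R := fun t ht => lt_of_lt_of_le hξ₁R (le_trans hx ht.1)
    have hSne : y ∈ S := ⟨⟨hxy.le, le_rfl⟩, hy⟩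
    have hScl : IsClosed S := by
      have : S = Icc x y ∩ deriv f ⁻¹' (Ici 0) := by
        ext t; simp [hSdef, Set.mem_Icc, and_comm]
      rw [this]
      exact ContinuousOn.preimage_isClosed_of_isClosed
        (fun t ht => ((hcontF' t (hIccR ht))).continuousWithinAt) isClosed_Icc isClosed_Ici
    have hSbdd : BddBelow S := ⟨x, fun t ht => ht.1.1⟩
    set b : ℝ := sInf S with hbdef
    have hbS : b ∈ S := hScl.csInf_mem ⟨y, hSne⟩ hSbdd
    have hbR : b ∈ Ioi R := hIccR hbS.1
    have hbx : x < b := by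
      rcases lt_or_eq_of_le hbS.1.1 with h | h
      · exact h
      · exfalso; rw [← h] at hbS; linarith [hbS.2]
    have hneg_below : ∀ t, x ≤ t → t < b → deriv f t < 0 := by
      intro t htx htb
      by_contra ht
      push_neg at ht
      have : t ∈ S := ⟨⟨htx, le_trans htb.le hbS.1.2⟩, ht⟩
      exact absurd (csInf_le hSbdd this) (not_le.mpr htb)
    have hb0 : deriv f b = 0 := by
      have htend : Tendsto (deriv f) (nhdsWithin b (Iio b)) (nhds (deriv f b)) :=
        ((hcontF' b hbR).tendsto).mono_left nhdsWithin_le_nhds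
      have hev : ∀ᶠ t in nhdsWithin b (Iio b), deriv f t ≤ 0 := by
        have hIoi : Ioi x ∈ nhdsWithin b (Iio b) :=
          nhdsWithin_le_nhds (Ioi_mem_nhds hbx)
        filter_upwards [hIoi, self_mem_nhdsWithin] with t htx htb
        exact (hneg_below t htx.le htb).le
      have hle : deriv f b ≤ 0 := le_of_tendsto htend hev
      linarith [hbS.2]
    have hb'' : deriv (deriv f) b < 0 := LM b (le_trans hx hbx.le) hb0
    have hDb : HasDerivAt (deriv f) (deriv (deriv f) b) b := (hddf b hbR).hasDerivAt
    rw [hasDerivAt_iff_tendsto_slope] at hDb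
    have hslope : ∀ᶠ t in nhdsWithin b {b}ᶜ, slope (deriv f) b t < 0 :=
      hDb.eventually (Iio_mem_nhds hb'')
    have hmono : nhdsWithin b (Iio b) ≤ nhdsWithin b {b}ᶜ :=
      nhdsWithin_mono b (fun t ht => ne_of_lt ht)
    have hIoi : Ioi x ∈ nhdsWithin b (Iio b) := nhdsWithin_le_nhds (Ioi_mem_nhds hbx)
    have hcomb : ∀ᶠ t in nhdsWithin b (Iio b),
        slope (deriv f) b t < 0 ∧ t < b ∧ x < t := by
      filter_upwards [hslope.filter_mono hmono, self_mem_nhdsWithin, hIoi] with t h1 h2 h3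
      exact ⟨h1, h2, h3⟩
    obtain ⟨t, hs, htb, htx⟩ := hcomb.exists
    have hsl : slope (deriv f) b t = deriv f t / (t - b) := by
      rw [slope_def_field, hb0, sub_zero]
    rw [hsl] at hs
    have htb' : t - b < 0 := by linarith
    have hft : deriv f t < 0 := hneg_below t htx.le htb
    have : 0 < deriv f t / (t - b) := div_pos_of_neg_of_neg hft htb'
    linarith
  -- Dichotomy: either f' is eventually < 0, or f' ≥ 0 beyond ξ₁
  by_cases hcase : ∃ x, ξ₁ ≤ x ∧ deriv f x < 0
  case neg =>
    -- f' ≥ 0 on [ξ₁, ∞): f is nondecreasing, H increases to ∞, contradiction with H decreasing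
    push_neg at hcase
    have hf'nn : ∀ x, ξ₁ ≤ x → 0 ≤ deriv f x := fun x hx => hcase x hx
    have hmono : MonotoneOn f (Ici ξ₁) := by
      apply monotoneOn_of_deriv_nonneg (convex_Ici ξ₁)
      · exact fun t ht => ((hdf t (hmemξ₁ t ht)).continuousAt).continuousWithinAt
      · intro t ht
        rw [interior_Ici] at ht
        exact (hdf t (hmemξ₁ t ht.le)).differentiableWithinAt
      · intro t ht
        rw [interior_Ici] at ht
        exact hf'nn t ht.le
    have hHanti : AntitoneOn Haux (Ici ξ₁) := by
      apply antitoneOn_of_deriv_nonpos (convex_Ici ξ₁)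
      · exact fun t ht => ((hH t (hmemξ₁ t ht)).differentiableAt.continuousAt).continuousWithinAt
      · intro t ht
        rw [interior_Ici] at ht
        exact (hH t (hmemξ₁ t ht.le)).differentiableAt.differentiableWithinAt
      · intro t ht
        rw [interior_Ici] at ht
        rw [(hH t (hmemξ₁ t ht.le)).deriv]
        have h1 : (0:ℝ) ≤ t ^ ((N:ℝ) - 1) := Real.rpow_nonneg (by
          have := lt_trans hR (hmemξ₁ t ht.le); linarith) _
        have h2 : f t * ((α + β * (N:ℝ)) - t ^ σ * f t ^ (p-1)) ≤ 0 := by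
          apply mul_nonpos_of_nonneg_of_nonpos (hf0 t (hmemξ₁ t ht.le)).le
          have := hξ₁Z t ht.le
          simp only [hM₀def] at this
          linarith [hα0, mul_pos hβ0 (lt_of_lt_of_le one_pos hN1)]
        exact mul_nonpos_of_nonneg_of_nonpos h1 h2
    -- contradiction: H ≥ β T f(ξ₁) → ∞
    have hfξ₁ : 0 < f ξ₁ := hf0 ξ₁ (hmemξ₁ ξ₁ le_rfl)
    set T : ℝ := max (max ξ₁ 1) ((Haux ξ₁ + 1) / (β * f ξ₁)) with hTdef
    have hT1 : ξ₁ ≤ T := le_trans (le_max_left _ _) (le_max_left _ _)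
    have hT2 : (1:ℝ) ≤ T := le_trans (le_max_right _ _) (le_max_left _ _)
    have hT3 : (Haux ξ₁ + 1) / (β * f ξ₁) ≤ T := le_max_right _ _
    have hT4 : Haux ξ₁ + 1 ≤ T * (β * f ξ₁) := by
      rw [div_le_iff₀ (by positivity)] at hT3; linarith
    have hTR : T ∈ Ioi R := hmemξ₁ T hT1
    have hg1T : 0 ≤ T ^ ((N:ℝ) - 1) * (m * f T ^ (m-1) * deriv f T) := by
      apply mul_nonneg (Real.rpow_nonneg (by linarith [lt_trans hR hTR]) _)
      apply mul_nonneg (mul_nonneg hm0.le (Real.rpow_nonneg (hf0 T hTR).le _))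
      exact hf'nn T hT1
    have hTN : T ≤ T ^ ((N:ℝ)) := by
      calc T = T ^ (1:ℝ) := (Real.rpow_one T).symm
      _ ≤ T ^ ((N:ℝ)) := Real.rpow_le_rpow_of_exponent_le hT2 hN1
    have hfT : f ξ₁ ≤ f T := hmono (self_mem_Ici) hT1 hT1
    have hHT : T * (β * f ξ₁) ≤ Haux T := by
      have h5 : β * (T ^ ((N:ℝ)) * f T) ≥ β * (T * f ξ₁) := by
        apply mul_le_mul_of_nonneg_left _ hβ0.le
        apply mul_le_mul hTN hfT hfξ₁.le (by positivity)
      simp only [hHdef]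
      linarith [hg1T, h5]
    have := hHanti self_mem_Ici (show T ∈ Ici ξ₁ from hT1) hT1
    linarith
  case pos =>
  obtain ⟨x₀, hx₀ξ₁, hx₀neg⟩ := hcase
  set a : ℝ := x₀ + 1 with hadef
  have hf'neg : ∀ t, a ≤ t → deriv f t < 0 := fun t ht =>
    NEG x₀ hx₀ξ₁ hx₀neg t (by linarith)
  have haξ₁ : ξ₁ ≤ a := by linarith
  have haR : R < a := lt_of_lt_of_le hξ₁R haξ₁
  have ha0 : 0 < a := lt_trans hR haR
  have hanti : AntitoneOn f (Ici a) := by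
    apply antitoneOn_of_deriv_nonpos (convex_Ici a)
    · exact fun t ht => ((hdf t (lt_of_lt_of_le haR ht)).continuousAt).continuousWithinAt
    · intro t ht
      rw [interior_Ici] at ht
      exact (hdf t (lt_of_lt_of_le haR ht.le)).differentiableWithinAt
    · intro t ht
      rw [interior_Ici] at ht
      exact (hf'neg t ht.le).le
  -- constants for the key inequality
  set e : ℝ := (N:ℝ) - 1 + σ with hedef
  set c₀ : ℝ := min 1 ((2:ℝ) ^ e) with hc₀def
  have hc₀0 : 0 < c₀ := lt_min one_pos (Real.rpow_pos_of_pos two_pos e)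
  have h2e1 : (0:ℝ) < (2:ℝ) ^ (e + 1) := Real.rpow_pos_of_pos two_pos _
  set δ : ℝ := c₀ / (4 * m * (2:ℝ) ^ (e + 1)) with hδdef
  have hδ0 : 0 < δ := by positivity
  set K : ℝ := 4 * β / c₀ with hKdef
  have hK0 : 0 < K := by positivity
  -- threshold for ψ
  have hψev : ∀ᶠ t in atTop, |t ^ (-(σ + 1)) * f t ^ (m - p - 1) * deriv f t| < δ := by
    have := hpsi0.eventually (Metric.ball_mem_nhds (0:ℝ) hδ0)
    filter_upwards [this] with t ht
    simp only [Metric.mem_ball, Real.dist_eq, sub_zero] at ht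
    exact ht
  obtain ⟨ξψ, hξψ⟩ := eventually_atTop.mp hψev
  set ξ₂ : ℝ := max (max ξ₁ a) (max ξψ 1) with hξ₂def
  have hξ₂ξ₁ : ξ₁ ≤ ξ₂ := le_trans (le_max_left _ _) (le_max_left _ _)
  have hξ₂a : a ≤ ξ₂ := le_trans (le_max_right _ _) (le_max_left _ _)
  have hξ₂ψ : ξψ ≤ ξ₂ := le_trans (le_max_left _ _) (le_max_right _ _)
  have hξ₂1 : (1:ℝ) ≤ ξ₂ := le_trans (le_max_right _ _) (le_max_right _ _)
  have hξ₂0 : (0:ℝ) < ξ₂ := lt_of_lt_of_le one_pos hξ₂1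
  -- the key inequality
  have KEY : ∀ ξ, ξ₂ ≤ ξ → f (2 * ξ) ^ p ≤ K * ξ ^ (-σ) * f ξ := by
    intro ξ hξ
    have hξ1 : (1:ℝ) ≤ ξ := le_trans hξ₂1 hξ
    have hξ0 : (0:ℝ) < ξ := lt_of_lt_of_le one_pos hξ1
    have hξa : a ≤ ξ := le_trans hξ₂a hξ
    have hξξ₁ : ξ₁ ≤ ξ := le_trans hξ₂ξ₁ hξ
    have hξR : R < ξ := lt_of_lt_of_le hξ₁R hξξ₁
    have h2ξR : R < 2 * ξ := by linarith
    have h2ξ0 : (0:ℝ) < 2 * ξ := by linarith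
    have hfξ : 0 < f ξ := hf0 ξ hξR
    have hf2ξ : 0 < f (2 * ξ) := hf0 _ h2ξR
    set A : ℝ := c₀ / 2 * (ξ ^ e * f (2 * ξ) ^ p) with hAdef
    have hA0 : 0 < A := by
      have := Real.rpow_pos_of_pos hξ0 e
      have := Real.rpow_pos_of_pos hf2ξ p
      positivity
    set Φ : ℝ → ℝ := fun t => Haux t + A * t with hΦdef
    have hΦd : ∀ t, R < t → HasDerivAt Φ
        (t ^ ((N:ℝ) - 1) * (f t * ((α + β * (N:ℝ)) - t ^ σ * f t ^ (p - 1))) + A) t := by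
      intro t ht
      have h2 : HasDerivAt (fun y : ℝ => A * y) A t := by
        simpa using (hasDerivAt_id t).const_mul A
      exact (hH t ht).add h2
    have hanti2 : AntitoneOn Φ (Icc ξ (2 * ξ)) := by
      apply antitoneOn_of_deriv_nonpos (convex_Icc _ _)
      · exact fun t ht =>
          ((hΦd t (lt_of_lt_of_le hξR ht.1)).differentiableAt.continuousAt).continuousWithinAt
      · intro t ht
        rw [interior_Icc] at ht
        exact (hΦd t (lt_trans hξR ht.1)).differentiableAt.differentiableWithinAt
      · intro t ht
        rw [interior_Icc] at ht
        have htR : R < t := lt_trans hξR ht.1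
        have ht0 : (0:ℝ) < t := lt_trans hR htR
        rw [(hΦd t htR).deriv]
        have hft : 0 < f t := hf0 t htR
        have hZt : M₀ ≤ t ^ σ * f t ^ (p - 1) := hξ₁Z t (le_trans hξξ₁ ht.1.le)
        have hMα : 2 * (α + β * (N:ℝ)) ≤ M₀ := by
          simp only [hM₀def]; linarith [hα0]
        have step1 : f t * ((α + β * (N:ℝ)) - t ^ σ * f t ^ (p - 1))
            ≤ f t * (-(t ^ σ * f t ^ (p - 1)) / 2) := by
          apply mul_le_mul_of_nonneg_left _ hft.le
          linarith
        have e5 : t ^ ((N:ℝ) - 1) * t ^ σ = t ^ e := by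
          rw [← Real.rpow_add ht0]
        have e6 : f t ^ (p - 1) * f t = f t ^ p := by
          rw [← Real.rpow_add_one hft.ne']; congr 1; ring
        have hval2 : t ^ ((N:ℝ) - 1) * (f t * (-(t ^ σ * f t ^ (p - 1)) / 2))
            = -(1/2) * (t ^ e * f t ^ p) := by
          rw [← e5, ← e6]; ring
        have hfe : f (2 * ξ) ^ p ≤ f t ^ p := by
          apply Real.rpow_le_rpow hf2ξ.le _ hp0.le
          exact hanti (show t ∈ Ici a from le_trans hξa ht.1.le)
            (show 2 * ξ ∈ Ici a from by simp only [mem_Ici]; linarith) ht.2.le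
        have hte : c₀ * ξ ^ e ≤ t ^ e := by
          rcases le_or_gt 0 e with he | he
          · have h1 : ξ ^ e ≤ t ^ e := Real.rpow_le_rpow hξ0.le ht.1.le he
            have h2 : c₀ * ξ ^ e ≤ 1 * ξ ^ e :=
              mul_le_mul_of_nonneg_right (min_le_left 1 ((2:ℝ) ^ e))
                (Real.rpow_nonneg hξ0.le e)
            linarith
          · have h1 : (2 * ξ) ^ e ≤ t ^ e :=
              Real.rpow_le_rpow_of_nonpos ht0 ht.2.le he.le
            have h2 : (2 * ξ) ^ e = 2 ^ e * ξ ^ e := Real.mul_rpow (by norm_num) hξ0.le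
            have h3 : c₀ * ξ ^ e ≤ 2 ^ e * ξ ^ e :=
              mul_le_mul_of_nonneg_right (min_le_right 1 ((2:ℝ) ^ e))
                (Real.rpow_nonneg hξ0.le e)
            linarith
        have hprod : (c₀ * ξ ^ e) * f (2 * ξ) ^ p ≤ t ^ e * f t ^ p :=
          mul_le_mul hte hfe (Real.rpow_nonneg hf2ξ.le _) (Real.rpow_nonneg ht0.le _)
        have hmain : t ^ ((N:ℝ) - 1) * (f t * ((α + β * (N:ℝ)) - t ^ σ * f t ^ (p - 1)))
            ≤ -(1/2) * (t ^ e * f t ^ p) := by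
          calc t ^ ((N:ℝ) - 1) * (f t * ((α + β * (N:ℝ)) - t ^ σ * f t ^ (p - 1)))
              ≤ t ^ ((N:ℝ) - 1) * (f t * (-(t ^ σ * f t ^ (p - 1)) / 2)) :=
                mul_le_mul_of_nonneg_left step1 (Real.rpow_nonneg ht0.le _)
            _ = -(1/2) * (t ^ e * f t ^ p) := hval2
        have hAeq : A = 1/2 * ((c₀ * ξ ^ e) * f (2 * ξ) ^ p) := by
          rw [hAdef]; ring
        linarith
    have hmem1 : ξ ∈ Icc ξ (2 * ξ) := ⟨le_rfl, by linarith⟩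
    have hmem2 : (2 * ξ) ∈ Icc ξ (2 * ξ) := ⟨by linarith, le_rfl⟩
    have hΦle := hanti2 hmem1 hmem2 (by linarith)
    have hstep : Haux (2 * ξ) + A * ξ ≤ Haux ξ := by
      simp only [hΦdef] at hΦle; linarith
    -- upper bound for Haux ξ
    have hg1ξ : m * f ξ ^ (m - 1) * deriv f ξ ≤ 0 := by
      have h1 := hf'neg ξ hξa
      have h2 : (0:ℝ) < m * f ξ ^ (m - 1) := by
        have := Real.rpow_pos_of_pos hfξ (m - 1); positivity
      exact mul_nonpos_of_nonneg_of_nonpos h2.le h1.le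
    have hup : Haux ξ ≤ β * (ξ ^ ((N:ℝ)) * f ξ) := by
      simp only [hHdef]
      linarith [mul_nonneg (Real.rpow_nonneg hξ0.le ((N:ℝ) - 1))
        (neg_nonneg.mpr hg1ξ)]
    -- lower bound for Haux (2ξ)
    have hψb : |(2 * ξ) ^ (-(σ + 1)) * f (2 * ξ) ^ (m - p - 1) * deriv f (2 * ξ)| < δ :=
      hξψ (2 * ξ) (by linarith [le_trans hξ₂ψ hξ])
    have hg1id : m * f (2 * ξ) ^ (m - 1) * deriv f (2 * ξ)
        = (m * ((2 * ξ) ^ (σ + 1) * f (2 * ξ) ^ p))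
          * ((2 * ξ) ^ (-(σ + 1)) * f (2 * ξ) ^ (m - p - 1) * deriv f (2 * ξ)) := by
      have e1 : (2 * ξ) ^ (σ + 1) * (2 * ξ) ^ (-(σ + 1)) = 1 := by
        rw [← Real.rpow_add h2ξ0, show σ + 1 + -(σ + 1) = 0 by ring, Real.rpow_zero]
      have e2 : f (2 * ξ) ^ p * f (2 * ξ) ^ (m - p - 1) = f (2 * ξ) ^ (m - 1) := by
        rw [← Real.rpow_add hf2ξ]; congr 1; ring
      calc m * f (2 * ξ) ^ (m - 1) * deriv f (2 * ξ)
          = m * (((2 * ξ) ^ (σ + 1) * (2 * ξ) ^ (-(σ + 1)))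
            * (f (2 * ξ) ^ p * f (2 * ξ) ^ (m - p - 1))) * deriv f (2 * ξ) := by
            rw [e1, e2]; ring
        _ = _ := by ring
    have hfac : 0 < m * ((2 * ξ) ^ (σ + 1) * f (2 * ξ) ^ p) := by
      have := Real.rpow_pos_of_pos h2ξ0 (σ + 1)
      have := Real.rpow_pos_of_pos hf2ξ p
      positivity
    have hg1low : -((m * ((2 * ξ) ^ (σ + 1) * f (2 * ξ) ^ p)) * δ)
        ≤ m * f (2 * ξ) ^ (m - 1) * deriv f (2 * ξ) := by
      rw [hg1id]
      have hψlb : -δ ≤ (2 * ξ) ^ (-(σ + 1)) * f (2 * ξ) ^ (m - p - 1) * deriv f (2 * ξ) :=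
        (abs_lt.mp hψb).1.le
      have := mul_le_mul_of_nonneg_left hψlb hfac.le
      linarith
    have hpw : (0:ℝ) ≤ (2 * ξ) ^ ((N:ℝ) - 1) := Real.rpow_nonneg h2ξ0.le _
    have hlow1 : -((2 * ξ) ^ ((N:ℝ) - 1) * (m * ((2 * ξ) ^ (σ + 1) * f (2 * ξ) ^ p)) * δ)
        ≤ (2 * ξ) ^ ((N:ℝ) - 1) * (m * f (2 * ξ) ^ (m - 1) * deriv f (2 * ξ)) := by
      have := mul_le_mul_of_nonneg_left hg1low hpw
      linarith
    have e7 : (2 * ξ) ^ ((N:ℝ) - 1) * (2 * ξ) ^ (σ + 1) = (2 * ξ) ^ (e + 1) := by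
      rw [← Real.rpow_add h2ξ0]; congr 1; simp only [hedef]; ring
    have e8 : (2 * ξ) ^ (e + 1) = 2 ^ (e + 1) * ξ ^ (e + 1) :=
      Real.mul_rpow (by norm_num) hξ0.le
    have e9 : ξ ^ (e + 1) = ξ ^ e * ξ := Real.rpow_add_one hξ0.ne' e
    have hδe : m * 2 ^ (e + 1) * δ = c₀ / 4 := by
      rw [hδdef]; field_simp
    have hquant : (2 * ξ) ^ ((N:ℝ) - 1) * (m * ((2 * ξ) ^ (σ + 1) * f (2 * ξ) ^ p)) * δ
        = c₀ / 4 * (ξ ^ e * ξ * f (2 * ξ) ^ p) := by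
      calc (2 * ξ) ^ ((N:ℝ) - 1) * (m * ((2 * ξ) ^ (σ + 1) * f (2 * ξ) ^ p)) * δ
          = ((2 * ξ) ^ ((N:ℝ) - 1) * (2 * ξ) ^ (σ + 1)) * f (2 * ξ) ^ p * (m * δ) := by ring
        _ = (2 ^ (e + 1) * (ξ ^ e * ξ)) * f (2 * ξ) ^ p * (m * δ) := by rw [e7, e8, e9]
        _ = (m * 2 ^ (e + 1) * δ) * (ξ ^ e * ξ * f (2 * ξ) ^ p) := by ring
        _ = c₀ / 4 * (ξ ^ e * ξ * f (2 * ξ) ^ p) := by rw [hδe]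
    have hlow : -(c₀ / 4 * (ξ ^ e * ξ * f (2 * ξ) ^ p)) ≤ Haux (2 * ξ) := by
      rw [← hquant]
      simp only [hHdef]
      have hterm2 : 0 ≤ β * ((2 * ξ) ^ ((N:ℝ)) * f (2 * ξ)) := by
        have := Real.rpow_nonneg h2ξ0.le ((N:ℝ)); positivity
      linarith [hlow1]
    have hAξ : A * ξ = c₀ / 2 * (ξ ^ e * ξ * f (2 * ξ) ^ p) := by
      rw [hAdef]; ring
    clear_value Φ A δ K c₀ e Haux
    have hcomb : c₀ / 4 * (ξ ^ e * ξ * f (2 * ξ) ^ p) ≤ β * (ξ ^ ((N:ℝ)) * f ξ) := by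
      have h1 : c₀ / 4 * (ξ ^ e * ξ * f (2 * ξ) ^ p) ≤ Haux ξ := by
        linarith [hstep, hlow, hAξ]
      linarith [h1, hup]
    have e10 : ξ ^ e * ξ = ξ ^ ((N:ℝ)) * ξ ^ σ := by
      rw [← Real.rpow_add_one hξ0.ne' e, ← Real.rpow_add hξ0]; congr 1
      simp only [hedef]; ring
    have hpN : (0:ℝ) < ξ ^ ((N:ℝ)) := Real.rpow_pos_of_pos hξ0 _
    have hfin : c₀ / 4 * (ξ ^ σ * f (2 * ξ) ^ p) ≤ β * f ξ := by
      rw [e10] at hcomb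
      have h' : ξ ^ ((N:ℝ)) * (c₀ / 4 * (ξ ^ σ * f (2 * ξ) ^ p))
          ≤ ξ ^ ((N:ℝ)) * (β * f ξ) := by linarith [hcomb]
      exact le_of_mul_le_mul_left h' hpN
    have hσpos : (0:ℝ) < ξ ^ σ := Real.rpow_pos_of_pos hξ0 σ
    have hKdiv : K * ξ ^ (-σ) * f ξ = (4 * β * f ξ) / (c₀ * ξ ^ σ) := by
      rw [Real.rpow_neg hξ0.le, hKdef]; field_simp
    have hnum : f (2 * ξ) ^ p * (c₀ * ξ ^ σ) ≤ 4 * β * f ξ := by linarith [hfin]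
    rw [hKdiv, le_div_iff₀ (by positivity)]
    exact hnum
  -- iteration and contradiction
  set u : ℕ → ℝ := fun k => σ * Real.log ((2:ℝ) ^ k * ξ₂)
    + (p - 1) * Real.log (f ((2:ℝ) ^ k * ξ₂)) with hudef
  have hseqpos : ∀ k : ℕ, ξ₂ ≤ (2:ℝ) ^ k * ξ₂ := by
    intro k
    have h1 : (1:ℝ) ≤ 2 ^ k := one_le_pow₀ (by norm_num)
    have := mul_le_mul_of_nonneg_right h1 hξ₂0.le
    linarith
  have hrec : ∀ k, u (k + 1) ≤ u k / p + (σ * Real.log 2 + (p - 1) / p * Real.log K) := by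
    intro k
    have hξk := hseqpos k
    have hx0 : (0:ℝ) < (2:ℝ) ^ k * ξ₂ := lt_of_lt_of_le hξ₂0 hξk
    have hxR : R < (2:ℝ) ^ k * ξ₂ := lt_of_lt_of_le hξ₁R (le_trans hξ₂ξ₁ hξk)
    have hfx : 0 < f ((2:ℝ) ^ k * ξ₂) := hf0 _ hxR
    have hfx2 : 0 < f (2 * ((2:ℝ) ^ k * ξ₂)) := hf0 _ (by simp only [mem_Ioi]; linarith)
    have hkey := KEY _ hξk
    have hstep := log_rec hK0 hx0 hfx hfx2 hp1 hkey
    have hco : (2:ℝ) ^ (k + 1) * ξ₂ = 2 * ((2:ℝ) ^ k * ξ₂) := by rw [pow_succ]; ring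
    simp only [hudef, hco]
    exact hstep
  have hutop : Tendsto u atTop atTop := by
    have hseq : Tendsto (fun k : ℕ => (2:ℝ) ^ k * ξ₂) atTop atTop :=
      Tendsto.atTop_mul_const hξ₂0
        (tendsto_pow_atTop_atTop_of_one_lt (by norm_num : (1:ℝ) < 2))
    have hcomp := (Real.tendsto_log_atTop.comp hZtop).comp hseq
    apply hcomp.congr
    intro k
    have hξk := hseqpos k
    have hx0 : (0:ℝ) < (2:ℝ) ^ k * ξ₂ := lt_of_lt_of_le hξ₂0 hξk
    have hxR : R < (2:ℝ) ^ k * ξ₂ := lt_of_lt_of_le hξ₁R (le_trans hξ₂ξ₁ hξk)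
    have hfx : 0 < f ((2:ℝ) ^ k * ξ₂) := hf0 _ hxR
    simp only [hudef, Function.comp]
    rw [Real.log_mul (Real.rpow_pos_of_pos hx0 σ).ne'
      (Real.rpow_pos_of_pos hfx _).ne', Real.log_rpow hx0, Real.log_rpow hfx]
  exact iter_contradiction hp1 hrec hutop
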